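/- arXiv:2402.00768 — 2 statements merged into one kernel-verified Lean document; each statement's English description precedes it below -/
import Mathlib

section
/- (Limit relation to multiple Kravchuk polynomials.) Fix N ∈ ℕ, r ≥ 1, n ∈ ℕ^r with |n| ≤ N, and pairwise distinct p_1,…,p_r ∈ (0,1); set β_i = 1 − p_i. For each q > 0, q ≠ 1, let K_q be the unique monic multiple q-Kravchuk polynomial of multi-index n (monic of degree |n| with Σ_{s=0}^{N} K_q(x_q(s)) [s]_q^{(k)} υ_q^{p_i,β_i,N}(s) q^{s−1/2} = 0 for 0 ≤ k ≤ n_i − 1, i = 1,…,r, where x_q(s) = (q^s − 1)/(q − 1)), and let K be the unique monic multiple Kravchuk polynomial of multi-index n (monic of degree |n| with Σ_{x=0}^{N} K(x) (−x)_j υ^{p_i,N}(x) = 0 for 0 ≤ j ≤ n_i − 1, i = 1,…,r). Then for every integer 0 ≤ s ≤ N, lim_{q→1} K_q(x_q(s)) = K(s); equivalently, each coefficient of K_q converges to the corresponding coefficient of K as q → 1. -/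
open Finset

/-- The non-uniform lattice `x(s) = (q^s - 1)/(q - 1)`. -/
noncomputable def qlat (q : ℝ) (s : ℤ) : ℝ := (q ^ s - 1) / (q - 1)

/-- The `q`-Stirling polynomial `[s]_q^{(k)} = ∏_{j=0}^{k-1} (q^{s-j} - 1)/(q - 1)`. -/
noncomputable def qStir (q : ℝ) (s : ℤ) (k : ℕ) : ℝ :=
  ∏ j ∈ Finset.range k, (q ^ (s - (j : ℤ)) - 1) / (q - 1)

/-- The symmetric `q`-number `[m]_q = q^{(1-m)/2}(q^m - 1)/(q - 1)`. -/
noncomputable def qNum (q : ℝ) (m : ℕ) : ℝ :=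
  q ^ ((1 - (m : ℝ)) / 2) * (q ^ m - 1) / (q - 1)

/-- The `q`-factorial `[M]_q! = ∏_{k=1}^{M} [k]_q`. -/
noncomputable def qFact (q : ℝ) (M : ℕ) : ℝ := ∏ k ∈ Finset.range M, qNum q (k + 1)

/-- The `q`-Kravchuk weight `υ_q^{p,β,N}(s)` supported on the integers `0 ≤ s ≤ N`. -/
noncomputable def qWeight (q p β : ℝ) (N : ℕ) (s : ℤ) : ℝ :=
  if 0 ≤ s ∧ s ≤ (N : ℤ) then
    q ^ (s * (s - 1) / 2) * qFact q N * p ^ s * β ^ ((N : ℤ) - s) /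
      (qFact q s.toNat * qFact q (N - s.toNat))
  else 0

/-- The orthogonality sum `Σ_{s=0}^{N} K(x(s)) [s]_q^{(k)} υ_q^{p,β,N}(s) q^{s-1/2}`. -/
noncomputable def qOrth (q p β : ℝ) (N : ℕ) (K : Polynomial ℝ) (k : ℕ) : ℝ :=
  ∑ s ∈ Finset.range (N + 1),
    K.eval (qlat q (s : ℤ)) * qStir q (s : ℤ) k * qWeight q p β N (s : ℤ) *
      q ^ ((s : ℝ) - 1 / 2)

/-- The classical Kravchuk weight `υ^{p,N}(x) = N! p^x (1-p)^{N-x}/(x!(N-x)!)`. -/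
noncomputable def kWeight (p : ℝ) (N : ℕ) (x : ℕ) : ℝ :=
  if x ≤ N then
    (N.factorial : ℝ) * p ^ x * (1 - p) ^ (N - x) / ((x.factorial : ℝ) * (N - x).factorial)
  else 0

/-- The Pochhammer symbol `(-x)_j = (-x)(-x+1)⋯(-x+j-1)`. -/
noncomputable def pochNeg (x : ℝ) (j : ℕ) : ℝ := ∏ l ∈ Finset.range j, (-x + l)

open Finset Polynomial Filter Topology

namespace S10

noncomputable def ffact (x k : ℕ) : ℝ := (x.descFactorial k : ℝ)

lemma ffact_eq_prod (x k : ℕ) : ffact x k = ∏ j ∈ range k, ((x:ℝ) - j) := by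
  rcases le_or_gt k x with h | h
  · rw [ffact, Nat.descFactorial_eq_prod_range, Nat.cast_prod]
    refine Finset.prod_congr rfl fun j hj => ?_
    rw [Nat.cast_sub (le_of_lt (lt_of_lt_of_le (mem_range.1 hj) h))]
  · rw [ffact, Nat.descFactorial_eq_zero_iff_lt.2 h, Nat.cast_zero]
    exact (Finset.prod_eq_zero (mem_range.2 h) (by simp)).symm

lemma sum_choose_X_pow (N : ℕ) :
    ∑ x ∈ range (N+1), C ((N.choose x : ℝ)) * X ^ x = ((X:ℝ[X]) + 1) ^ N := by
  rw [add_pow]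
  refine Finset.sum_congr rfl fun x _ => ?_
  rw [one_pow, mul_one, mul_comm, C_eq_natCast]

lemma nat_id (N k y : ℕ) (h : k + y ≤ N) :
    (k+y).descFactorial k * N.choose (k+y) = N.descFactorial k * ((N-k).choose y) := by
  rw [Nat.descFactorial_eq_factorial_mul_choose, Nat.descFactorial_eq_factorial_mul_choose,
    mul_assoc, mul_assoc]
  congr 1
  rw [mul_comm, Nat.choose_mul (Nat.le_add_right k y), Nat.add_sub_cancel_left]

lemma sum_desc_choose (N k : ℕ) (hk : k ≤ N) :
    ∑ x ∈ range (N+1), C (((x.descFactorial k : ℕ) : ℝ) * ((N.choose x : ℕ):ℝ)) * X ^ x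
      = C (((N.descFactorial k : ℕ) : ℝ)) * X ^ k * ((X:ℝ[X]) + 1) ^ (N - k) := by
  have h1 : ∑ x ∈ range (N+1), C (((x.descFactorial k : ℕ) : ℝ) * ((N.choose x : ℕ):ℝ)) * X ^ x
      = ∑ x ∈ Ico k (N+1), C (((x.descFactorial k : ℕ) : ℝ) * ((N.choose x : ℕ):ℝ)) * X ^ x := by
    refine (Finset.sum_subset (by intro x hx; simp only [mem_Ico, mem_range] at *; omega) ?_).symm
    intro x hx hnx
    simp only [mem_Ico, mem_range] at hx hnx
    have : x < k := by omega
    rw [Nat.descFactorial_eq_zero_iff_lt.2 this]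
    simp
  rw [h1, Finset.sum_Ico_eq_sum_range]
  have h2 : N + 1 - k = (N - k) + 1 := by omega
  rw [h2]
  have h3 : ∀ y ∈ range (N - k + 1),
      C (((((k+y).descFactorial k : ℕ)) : ℝ) * ((N.choose (k+y) : ℕ):ℝ)) * X ^ (k+y)
        = C (((N.descFactorial k : ℕ) : ℝ)) * X ^ k * (C (((N-k).choose y : ℕ):ℝ) * X ^ y) := by
    intro y hy
    have hy' : k + y ≤ N := by simp only [mem_range] at hy; omega
    rw [← Nat.cast_mul, nat_id N k y hy', Nat.cast_mul, pow_add]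
    rw [C_mul]
    ring
  rw [Finset.sum_congr rfl h3, ← Finset.mul_sum, sum_choose_X_pow (N - k)]

lemma dvd_aux (N : ℕ) : ∀ d, ∀ P : Polynomial ℝ, P.natDegree ≤ d →
    ((X:ℝ[X]) + 1) ^ (N - d) ∣ ∑ x ∈ range (N+1), C (P.eval (x:ℝ) * ((N.choose x : ℕ):ℝ)) * X ^ x := by
  intro d
  induction d with
  | zero =>
    intro P hP
    have hPc : P = C (P.coeff 0) := (Polynomial.eq_C_of_natDegree_le_zero hP)
    have : ∑ x ∈ range (N+1), C (P.eval (x:ℝ) * ((N.choose x : ℕ):ℝ)) * X ^ x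
        = C (P.coeff 0) * ∑ x ∈ range (N+1), C (((N.choose x : ℕ):ℝ)) * X ^ x := by
      rw [Finset.mul_sum]
      refine Finset.sum_congr rfl fun x _ => ?_
      rw [hPc]
      simp [mul_assoc, ← C_mul]
    rw [this, sum_choose_X_pow N, Nat.sub_zero]
    exact dvd_mul_left _ _
  | succ d ih =>
    intro P hP
    rcases le_or_gt (d+1) N with hdN | hdN
    swap
    · have : N - (d+1) = 0 := by omega
      rw [this, pow_zero]
      exact one_dvd _
    set a := P.coeff (d+1) with ha
    set Q := P - C a * descPochhammer ℝ (d+1) with hQ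
    have hdp_deg : (descPochhammer ℝ (d+1)).natDegree = d+1 := descPochhammer_natDegree ℝ (d+1)
    have hdp_monic : (descPochhammer ℝ (d+1)).Monic := monic_descPochhammer ℝ (d+1)
    have hQdeg : Q.natDegree ≤ d := by
      rw [Polynomial.natDegree_le_iff_coeff_eq_zero]
      intro m hm
      rcases eq_or_lt_of_le (Nat.succ_le_of_lt hm) with hm' | hm'
      · rw [hQ, Polynomial.coeff_sub, Polynomial.coeff_C_mul, ← hm']
        have : (descPochhammer ℝ (d+1)).coeff (d+1) = 1 := by
          have := hdp_monic.coeff_natDegree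
          rwa [hdp_deg] at this
        rw [this, mul_one, ← ha, sub_self]
      · rw [hQ, Polynomial.coeff_sub, Polynomial.coeff_C_mul]
        rw [Polynomial.coeff_eq_zero_of_natDegree_lt (lt_of_le_of_lt hP hm'),
          Polynomial.coeff_eq_zero_of_natDegree_lt (by rw [hdp_deg]; exact hm')]
        ring
    have hsplit : ∑ x ∈ range (N+1), C (P.eval (x:ℝ) * ((N.choose x : ℕ):ℝ)) * X ^ x
        = (∑ x ∈ range (N+1), C (Q.eval (x:ℝ) * ((N.choose x : ℕ):ℝ)) * X ^ x)
          + C a * ∑ x ∈ range (N+1), C (((x.descFactorial (d+1) : ℕ) : ℝ) * ((N.choose x : ℕ):ℝ)) * X ^ x := by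
      rw [Finset.mul_sum, ← Finset.sum_add_distrib]
      refine Finset.sum_congr rfl fun x _ => ?_
      have hPev : P.eval (x:ℝ) = Q.eval (x:ℝ) + a * ((x.descFactorial (d+1) : ℕ) : ℝ) := by
        rw [hQ]
        simp only [Polynomial.eval_sub, Polynomial.eval_mul, Polynomial.eval_C]
        rw [descPochhammer_eval_eq_descFactorial ℝ x (d+1)]
        ring
      have hr : (Q.eval (x:ℝ) + a * ((x.descFactorial (d+1) : ℕ) : ℝ)) * ((N.choose x : ℕ):ℝ)
          = Q.eval (x:ℝ) * ((N.choose x : ℕ):ℝ)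
            + a * (((x.descFactorial (d+1) : ℕ) : ℝ) * ((N.choose x : ℕ):ℝ)) := by ring
      rw [hPev, hr, C_add, add_mul]
      rw [show (C (a * ((((x.descFactorial (d+1) : ℕ)) : ℝ) * ((N.choose x : ℕ):ℝ))) : Polynomial ℝ)
          = C a * C ((((x.descFactorial (d+1) : ℕ)) : ℝ) * ((N.choose x : ℕ):ℝ)) from C_mul,
        mul_assoc]
    rw [hsplit]
    have hd1 : ((X:ℝ[X]) + 1) ^ (N - (d+1)) ∣ ∑ x ∈ range (N+1), C (Q.eval (x:ℝ) * ((N.choose x : ℕ):ℝ)) * X ^ x :=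
      dvd_trans (pow_dvd_pow _ (by omega)) (ih Q hQdeg)
    have hd2 : ((X:ℝ[X]) + 1) ^ (N - (d+1)) ∣ C a * ∑ x ∈ range (N+1), C (((x.descFactorial (d+1) : ℕ) : ℝ) * ((N.choose x : ℕ):ℝ)) * X ^ x := by
      rw [sum_desc_choose N (d+1) hdN]
      exact dvd_mul_of_dvd_right (dvd_mul_left _ _) _
    exact dvd_add hd1 hd2


lemma isCoprime_X_sub_C' {a b : ℝ} (h : a ≠ b) :
    IsCoprime ((X:ℝ[X]) - C a) ((X:ℝ[X]) - C b) := by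
  refine ⟨-C (a-b)⁻¹, C (a-b)⁻¹, ?_⟩
  have hab : (a - b) ≠ 0 := sub_ne_zero.2 h
  rw [show (-C (a-b)⁻¹ * ((X:ℝ[X]) - C a) + C (a-b)⁻¹ * ((X:ℝ[X]) - C b) : Polynomial ℝ)
      = C (a-b)⁻¹ * (C a - C b) by ring, ← C_sub, ← C_mul, inv_mul_cancel₀ hab, C_1]

lemma kernel (N M r : ℕ) (hMN : M ≤ N) (n : Fin r → ℕ) (hM : ∑ i, n i = M)
    (t : Fin r → ℝ) (ht0 : ∀ i, 0 < t i) (htinj : Function.Injective t)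
    (P : Polynomial ℝ) (hdeg : P.natDegree < M)
    (hcond : ∀ i : Fin r, ∀ k, k < n i →
      ∑ x ∈ range (N+1), P.eval (x:ℝ) * ffact x k * (((N.choose x : ℕ):ℝ) * t i ^ x) = 0) :
    P = 0 := by
  by_contra hP0
  set d := P.natDegree with hd
  set f : Polynomial ℝ := ∑ x ∈ range (N+1), C (P.eval (x:ℝ) * ((N.choose x : ℕ):ℝ)) * X ^ x with hf
  -- coefficients of f
  have hfcoeff : ∀ j, j ≤ N → f.coeff j = P.eval (j:ℝ) * ((N.choose j : ℕ):ℝ) := by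
    intro j hj
    rw [hf, Polynomial.finset_sum_coeff]
    rw [Finset.sum_eq_single j]
    · rw [Polynomial.coeff_C_mul, Polynomial.coeff_X_pow, if_pos rfl, mul_one]
    · intro x _ hxj
      rw [Polynomial.coeff_C_mul, Polynomial.coeff_X_pow, if_neg (fun h => hxj h.symm), mul_zero]
    · intro hj'
      exact absurd (mem_range.2 (by omega)) hj'
  -- f ≠ 0
  have hfne : f ≠ 0 := by
    intro h0
    apply hP0
    have heval : ∀ i : Fin (N+1), P.eval ((i:ℕ):ℝ) = 0 := by
      intro i
      have hi : (i:ℕ) ≤ N := by omega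
      have := hfcoeff i hi
      rw [h0, Polynomial.coeff_zero] at this
      rcases mul_eq_zero.1 this.symm with h | h
      · exact h
      · exact absurd h (Nat.cast_ne_zero.2 (Nat.choose_pos hi).ne')
    refine Polynomial.eq_zero_of_natDegree_lt_card_of_eval_eq_zero P
      (f := fun i : Fin (N+1) => ((i : ℕ) : ℝ)) ?_ heval ?_
    · intro i j hij
      have : (i : ℕ) = (j : ℕ) := Nat.cast_injective hij
      exact Fin.ext this
    · rw [Fintype.card_fin]; omega
  -- iterated derivatives
  have hiter : ∀ j : ℕ, Polynomial.derivative^[j] f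
      = ∑ x ∈ range (N+1), C (P.eval (x:ℝ) * ((N.choose x : ℕ):ℝ) * ((x.descFactorial j : ℕ):ℝ)) * X ^ (x - j) := by
    intro j
    rw [hf, Polynomial.iterate_derivative_sum]
    refine Finset.sum_congr rfl fun x _ => ?_
    rw [Polynomial.iterate_derivative_C_mul, Polynomial.iterate_derivative_X_pow_eq_C_mul]
    rw [← mul_assoc, ← C_mul]
  -- derivative conditions
  have hder : ∀ i : Fin r, ∀ j, j < n i → (Polynomial.derivative^[j] f).IsRoot (t i) := by
    intro i j hj
    have hev : (Polynomial.derivative^[j] f).eval (t i)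
        = ∑ x ∈ range (N+1), P.eval (x:ℝ) * ((N.choose x : ℕ):ℝ) * ((x.descFactorial j : ℕ):ℝ) * (t i) ^ (x - j) := by
      rw [hiter j]
      simp [Polynomial.eval_finset_sum]
    have hne : (t i) ^ j ≠ 0 := pow_ne_zero _ (ht0 i).ne'
    have hmul : (t i) ^ j * (Polynomial.derivative^[j] f).eval (t i)
        = ∑ x ∈ range (N+1), P.eval (x:ℝ) * ffact x j * (((N.choose x : ℕ):ℝ) * t i ^ x) := by
      rw [hev, Finset.mul_sum]
      refine Finset.sum_congr rfl fun x _ => ?_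
      rcases le_or_gt j x with hjx | hjx
      · have hpow : (t i) ^ j * (t i) ^ (x - j) = (t i) ^ x := by
          rw [← pow_add]; congr 1; omega
        rw [ffact]
        calc (t i)^j * (P.eval (x:ℝ) * ((N.choose x:ℕ):ℝ) * ((x.descFactorial j:ℕ):ℝ) * (t i)^(x-j))
            = P.eval (x:ℝ) * ((x.descFactorial j:ℕ):ℝ) * (((N.choose x:ℕ):ℝ) * ((t i)^j * (t i)^(x-j))) := by
              ring
          _ = _ := by rw [hpow]
      · rw [ffact, Nat.descFactorial_eq_zero_iff_lt.2 hjx]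
        simp
    have := hcond i j hj
    rw [← hmul] at this
    rcases mul_eq_zero.1 this with h | h
    · exact absurd h hne
    · exact h
  -- root multiplicities
  have hmult : ∀ i : Fin r, n i ≤ f.rootMultiplicity (t i) := by
    intro i
    rcases Nat.eq_zero_or_pos (n i) with h0 | h0
    · omega
    · have : n i - 1 < f.rootMultiplicity (t i) := by
        apply Polynomial.lt_rootMultiplicity_of_isRoot_iterate_derivative hfne
        intro m hm
        exact hder i m (by omega)
      omega
  have hdvd1 : (∏ i : Fin r, ((X:ℝ[X]) - C (t i)) ^ (n i)) ∣ f := by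
    refine Finset.prod_dvd_of_coprime ?_ fun i _ => ?_
    · intro i _ j _ hij
      exact ((Polynomial.pairwise_coprime_X_sub_C htinj hij).pow)
    · exact dvd_trans (pow_dvd_pow _ (hmult i)) (Polynomial.pow_rootMultiplicity_dvd f (t i))
  have hdvd2 : ((X:ℝ[X]) + 1) ^ (N - d) ∣ f := dvd_aux N d P le_rfl
  have hcop : IsCoprime (∏ i : Fin r, ((X:ℝ[X]) - C (t i)) ^ (n i)) (((X:ℝ[X]) + 1) ^ (N - d)) := by
    refine IsCoprime.prod_left fun i _ => ?_
    refine (IsCoprime.pow ?_)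
    have hti : t i ≠ -1 := by
      intro h; have := ht0 i; rw [h] at this; linarith
    have := isCoprime_X_sub_C' hti
    rwa [map_neg, C_1, sub_neg_eq_add] at this
  have hdvd : (∏ i : Fin r, ((X:ℝ[X]) - C (t i)) ^ (n i)) * ((X:ℝ[X]) + 1) ^ (N - d) ∣ f :=
    hcop.mul_dvd hdvd1 hdvd2
  -- degree contradiction
  have hprodne : (∏ i : Fin r, ((X:ℝ[X]) - C (t i)) ^ (n i)) ≠ 0 := by
    apply Finset.prod_ne_zero_iff.2
    intro i _
    exact pow_ne_zero _ (Polynomial.X_sub_C_ne_zero (t i))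
  have hX1 : ((X:ℝ[X]) + 1) = X + C 1 := by rw [C_1]
  have hpowne : (((X:ℝ[X]) + 1) ^ (N - d)) ≠ 0 := by
    apply pow_ne_zero
    rw [hX1]
    exact (Polynomial.monic_X_add_C (1:ℝ)).ne_zero
  have hdegprod : ((∏ i : Fin r, ((X:ℝ[X]) - C (t i)) ^ (n i)) * ((X:ℝ[X]) + 1) ^ (N - d)).natDegree
      = M + (N - d) := by
    rw [Polynomial.natDegree_mul hprodne hpowne]
    congr 1
    · rw [Polynomial.natDegree_prod _ _ (fun i _ => pow_ne_zero _ (Polynomial.X_sub_C_ne_zero (t i)))]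
      simp only [Polynomial.natDegree_pow, Polynomial.natDegree_X_sub_C, mul_one]
      exact hM
    · rw [Polynomial.natDegree_pow]
      have : ((X:ℝ[X]) + 1).natDegree = 1 := by
        rw [hX1, Polynomial.natDegree_X_add_C]
      rw [this, mul_one]
  have hfdeg : f.natDegree ≤ N := by
    rw [hf]
    refine Polynomial.natDegree_sum_le_of_forall_le _ _ fun x hx => ?_
    refine le_trans (Polynomial.natDegree_C_mul_le _ _) ?_
    rw [Polynomial.natDegree_X_pow]
    exact Nat.lt_succ_iff.1 (mem_range.1 hx)
  have hle := Polynomial.natDegree_le_of_dvd hdvd hfne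
  rw [hdegprod] at hle
  omega


noncomputable def L : Filter ℝ := nhdsWithin 1 {q : ℝ | 0 < q ∧ q ≠ 1}

lemma L_le_ne : L ≤ nhdsWithin (1:ℝ) {q : ℝ | q ≠ 1} :=
  nhdsWithin_mono 1 (fun q hq => hq.2)

lemma tendsto_qdiff (a : ℤ) :
    Filter.Tendsto (fun q : ℝ => (q ^ a - 1)/(q - 1)) L (𝓝 (a : ℝ)) := by
  have h := hasDerivAt_zpow a (1:ℝ) (Or.inl one_ne_zero)
  rw [hasDerivAt_iff_tendsto_slope] at h
  have h2 : Filter.Tendsto (slope (fun q : ℝ => q ^ a) 1) L (𝓝 ((a:ℝ) * 1 ^ (a - 1))) :=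
    h.mono_left L_le_ne
  rw [one_zpow, mul_one] at h2
  refine h2.congr fun q => ?_
  rw [slope_def_field, one_zpow]

lemma tendsto_qlat (s : ℕ) : Filter.Tendsto (fun q : ℝ => qlat q (s:ℤ)) L (𝓝 (s:ℝ)) := by
  have := tendsto_qdiff (s:ℤ)
  simpa [qlat] using this

lemma tendsto_qStir (s k : ℕ) :
    Filter.Tendsto (fun q : ℝ => qStir q (s:ℤ) k) L (𝓝 (ffact s k)) := by
  rw [ffact_eq_prod]
  have : ∀ j ∈ range k, Filter.Tendsto (fun q : ℝ => (q ^ ((s:ℤ) - (j:ℤ)) - 1)/(q - 1)) L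
      (𝓝 ((s:ℝ) - (j:ℝ))) := by
    intro j _
    have := tendsto_qdiff ((s:ℤ) - (j:ℤ))
    have hc : (((s:ℤ) - (j:ℤ) : ℤ) : ℝ) = (s:ℝ) - (j:ℝ) := by push_cast; ring
    rwa [hc] at this
  exact tendsto_finset_prod _ this

lemma tendsto_L_rpow (c : ℝ) : Filter.Tendsto (fun q : ℝ => q ^ c) L (𝓝 1) := by
  have h : ContinuousAt (fun q : ℝ => q ^ c) 1 :=
    Real.continuousAt_rpow_const 1 c (Or.inl one_ne_zero)
  have := h.tendsto.mono_left (nhdsWithin_le_nhds (s := {q : ℝ | 0 < q ∧ q ≠ 1}))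
  rwa [Real.one_rpow] at this

lemma tendsto_L_zpow (z : ℤ) : Filter.Tendsto (fun q : ℝ => q ^ z) L (𝓝 1) := by
  have h : ContinuousAt (fun q : ℝ => q ^ z) 1 := continuousAt_zpow₀ (1:ℝ) z (Or.inl one_ne_zero)
  have := h.tendsto.mono_left (nhdsWithin_le_nhds (s := {q : ℝ | 0 < q ∧ q ≠ 1}))
  rwa [one_zpow] at this

lemma tendsto_qNum (m : ℕ) : Filter.Tendsto (fun q : ℝ => qNum q m) L (𝓝 (m:ℝ)) := by
  have h1 := tendsto_L_rpow ((1 - (m:ℝ))/2)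
  have h2 := tendsto_qdiff (m:ℤ)
  have h3 := h1.mul h2
  rw [one_mul] at h3
  refine h3.congr fun q => ?_
  rw [qNum, mul_div_assoc]
  norm_num [zpow_natCast]

lemma tendsto_qFact (m : ℕ) :
    Filter.Tendsto (fun q : ℝ => qFact q m) L (𝓝 (m.factorial : ℝ)) := by
  have hfac : (m.factorial : ℝ) = ∏ k ∈ range m, ((k+1 : ℕ) : ℝ) := by
    rw [← Nat.cast_prod]
    congr 1
    induction m with
    | zero => simp
    | succ m ih => rw [Finset.prod_range_succ, ← ih, Nat.factorial_succ, mul_comm]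
  rw [hfac]
  exact tendsto_finset_prod _ (fun k _ => tendsto_qNum (k+1))

lemma tendsto_qWeight (p : ℝ) (N x : ℕ) (hx : x ≤ N) :
    Filter.Tendsto (fun q : ℝ => qWeight q p (1-p) N (x:ℤ)) L (𝓝 (kWeight p N x)) := by
  have hif : (0 ≤ (x:ℤ) ∧ (x:ℤ) ≤ (N:ℤ)) := ⟨Int.ofNat_nonneg x, by exact_mod_cast hx⟩
  have hqw : ∀ q : ℝ, qWeight q p (1-p) N (x:ℤ)
      = (q ^ ((x:ℤ) * ((x:ℤ) - 1) / 2) * qFact q N * p ^ x * (1-p) ^ (N - x)) /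
          (qFact q x * qFact q (N - x)) := by
    intro q
    rw [qWeight, if_pos hif]
    rw [Int.toNat_natCast]
    rw [show ((N:ℤ) - (x:ℤ)) = ((N - x : ℕ) : ℤ) by omega]
    rw [zpow_natCast, zpow_natCast]
  simp only [hqw]
  have hnum : Filter.Tendsto
      (fun q : ℝ => q ^ ((x:ℤ) * ((x:ℤ) - 1) / 2) * qFact q N * p ^ x * (1-p) ^ (N - x)) L
      (𝓝 ((N.factorial : ℝ) * p ^ x * (1-p) ^ (N - x))) := by
    have := ((tendsto_L_zpow ((x:ℤ) * ((x:ℤ) - 1) / 2)).mul (tendsto_qFact N)).mul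
      (tendsto_const_nhds (x := p ^ x))
    have h2 := this.mul (tendsto_const_nhds (x := (1-p) ^ (N - x)))
    rw [one_mul] at h2
    exact h2
  have hden : Filter.Tendsto (fun q : ℝ => qFact q x * qFact q (N - x)) L
      (𝓝 ((x.factorial : ℝ) * ((N - x).factorial : ℝ))) :=
    (tendsto_qFact x).mul (tendsto_qFact (N - x))
  have hdne : ((x.factorial : ℝ) * ((N - x).factorial : ℝ)) ≠ 0 := by positivity
  have := hnum.div hden hdne
  rwa [kWeight, if_pos hx]

lemma tendsto_rpow_shift (x : ℕ) :
    Filter.Tendsto (fun q : ℝ => q ^ ((x:ℝ) - 1/2)) L (𝓝 1) := tendsto_L_rpow _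

lemma tendsto_entry (N : ℕ) (p : ℝ) (k m : ℕ) :
    Filter.Tendsto (fun q : ℝ => ∑ x ∈ range (N+1),
        (qlat q (x:ℤ)) ^ m * (qStir q (x:ℤ) k * (qWeight q p (1-p) N (x:ℤ) * q ^ ((x:ℝ) - 1/2)))) L
      (𝓝 (∑ x ∈ range (N+1), ((x:ℝ)) ^ m * (ffact x k * kWeight p N x))) := by
  refine tendsto_finset_sum _ fun x hx => ?_
  have hx' : x ≤ N := Nat.lt_succ_iff.1 (mem_range.1 hx)
  have h1 := (tendsto_qlat x).pow m
  have h2 := tendsto_qStir x k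
  have h3 := tendsto_qWeight p N x hx'
  have h4 := tendsto_rpow_shift x
  have := h1.mul (h2.mul (h3.mul h4))
  rwa [mul_one] at this


lemma pochNeg_eq (x j : ℕ) : pochNeg (x:ℝ) j = (-1)^j * ffact x j := by
  rw [pochNeg, ffact_eq_prod]
  calc ∏ l ∈ range j, (-(x:ℝ) + l) = ∏ l ∈ range j, (-1) * ((x:ℝ) - l) := by
        refine Finset.prod_congr rfl fun l _ => by ring
    _ = (-1)^j * ∏ l ∈ range j, ((x:ℝ) - l) := by
        rw [Finset.prod_mul_distrib, Finset.prod_const, Finset.card_range]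

lemma kWeight_eq (p : ℝ) (hp0 : 0 < p) (hp1 : p < 1) (N x : ℕ) (hx : x ≤ N) :
    kWeight p N x = (1-p)^N * (((N.choose x : ℕ):ℝ) * (p/(1-p))^x) := by
  have h1p : (1:ℝ) - p ≠ 0 := by linarith
  have hpowx : ((1:ℝ)-p)^x ≠ 0 := pow_ne_zero _ h1p
  have hxf : (x.factorial : ℝ) ≠ 0 := Nat.cast_ne_zero.2 (Nat.factorial_ne_zero x)
  have hnxf : ((N-x).factorial : ℝ) ≠ 0 := Nat.cast_ne_zero.2 (Nat.factorial_ne_zero (N-x))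
  have hsplit : ((1:ℝ)-p)^N = (1-p)^(N-x) * (1-p)^x := by
    rw [← pow_add]; congr 1; omega
  rw [kWeight, if_pos hx, Nat.cast_choose ℝ hx, div_pow, hsplit]
  field_simp

lemma eval_expand {M : ℕ} {ι : Type*} [Fintype ι] (e : ι ≃ Fin M) (P : Polynomial ℝ)
    (hP : P.Monic) (hPd : P.natDegree = M) (y : ℝ) :
    P.eval y = ∑ κ : ι, P.coeff ((e κ : Fin M) : ℕ) * y ^ ((e κ : Fin M) : ℕ) + y ^ M := by
  have h1 : P.natDegree < M + 1 := by omega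
  rw [Polynomial.eval_eq_sum_range' h1 y, Finset.sum_range_succ]
  have hco : P.coeff M = 1 := by
    have := hP.coeff_natDegree
    rwa [hPd] at this
  rw [hco, one_mul]
  congr 1
  rw [← Fin.sum_univ_eq_sum_range (fun j => P.coeff j * y ^ j) M]
  exact (Equiv.sum_comp e (fun j : Fin M => P.coeff (j:ℕ) * y ^ (j:ℕ))).symm

lemma orth_expand {M : ℕ} {ι : Type*} [Fintype ι] (e : ι ≃ Fin M) (P : Polynomial ℝ)
    (hP : P.Monic) (hPd : P.natDegree = M) (T : ℕ) (y R : ℕ → ℝ) :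
    ∑ x ∈ range T, P.eval (y x) * R x
      = ∑ κ : ι, (∑ x ∈ range T, (y x) ^ ((e κ : Fin M) : ℕ) * R x) * P.coeff ((e κ : Fin M) : ℕ)
        + ∑ x ∈ range T, (y x) ^ M * R x := by
  have h1 : ∀ x, P.eval (y x) * R x
      = (∑ κ : ι, P.coeff ((e κ : Fin M) : ℕ) * (y x) ^ ((e κ : Fin M) : ℕ) * R x) + (y x) ^ M * R x := by
    intro x
    rw [eval_expand e P hP hPd (y x), add_mul, Finset.sum_mul]
  rw [Finset.sum_congr rfl (fun x _ => h1 x), Finset.sum_add_distrib]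
  congr 1
  rw [Finset.sum_comm]
  refine Finset.sum_congr rfl fun κ _ => ?_
  rw [Finset.sum_mul]
  refine Finset.sum_congr rfl fun x _ => by ring

lemma t_inj {r : ℕ} (p : Fin r → ℝ) (hp : ∀ i, 0 < p i ∧ p i < 1)
    (hdist : ∀ i j, i ≠ j → p i ≠ p j) :
    Function.Injective (fun i => p i / (1 - p i)) := by
  intro i j hij
  by_contra hne
  apply hdist i j hne
  have h1i : (1:ℝ) - p i ≠ 0 := by have := (hp i).2; linarith
  have h1j : (1:ℝ) - p j ≠ 0 := by have := (hp j).2; linarith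
  simp only at hij
  rw [div_eq_div_iff h1i h1j] at hij
  linear_combination hij


noncomputable def Aq {r : ℕ} {n : Fin r → ℕ} {M : ℕ} (e : ((i : Fin r) × Fin (n i)) ≃ Fin M)
    (N : ℕ) (p : Fin r → ℝ) (q : ℝ) :
    Matrix ((i : Fin r) × Fin (n i)) ((i : Fin r) × Fin (n i)) ℝ :=
  fun ρ κ => ∑ x ∈ range (N+1), (qlat q (x:ℤ)) ^ ((e κ : Fin M) : ℕ) *
      (qStir q (x:ℤ) (ρ.2:ℕ) * (qWeight q (p ρ.1) (1 - p ρ.1) N (x:ℤ) * q ^ ((x:ℝ) - 1/2)))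

noncomputable def bvq {r : ℕ} {n : Fin r → ℕ} (M : ℕ)
    (N : ℕ) (p : Fin r → ℝ) (q : ℝ) : ((i : Fin r) × Fin (n i)) → ℝ :=
  fun ρ => ∑ x ∈ range (N+1), (qlat q (x:ℤ)) ^ M *
      (qStir q (x:ℤ) (ρ.2:ℕ) * (qWeight q (p ρ.1) (1 - p ρ.1) N (x:ℤ) * q ^ ((x:ℝ) - 1/2)))

noncomputable def Ainf {r : ℕ} {n : Fin r → ℕ} {M : ℕ} (e : ((i : Fin r) × Fin (n i)) ≃ Fin M)
    (N : ℕ) (p : Fin r → ℝ) :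
    Matrix ((i : Fin r) × Fin (n i)) ((i : Fin r) × Fin (n i)) ℝ :=
  fun ρ κ => ∑ x ∈ range (N+1), ((x:ℝ)) ^ ((e κ : Fin M) : ℕ) *
      (ffact x (ρ.2:ℕ) * kWeight (p ρ.1) N x)

noncomputable def binf {r : ℕ} {n : Fin r → ℕ} (M : ℕ)
    (N : ℕ) (p : Fin r → ℝ) : ((i : Fin r) × Fin (n i)) → ℝ :=
  fun ρ => ∑ x ∈ range (N+1), ((x:ℝ)) ^ M * (ffact x (ρ.2:ℕ) * kWeight (p ρ.1) N x)

lemma det_Ainf_ne_zero {r N M : ℕ} {n : Fin r → ℕ} (e : ((i : Fin r) × Fin (n i)) ≃ Fin M)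
    (p : Fin r → ℝ) (hp : ∀ i, 0 < p i ∧ p i < 1) (hdist : ∀ i j, i ≠ j → p i ≠ p j)
    (hM : ∑ i, n i = M) (hMN : M ≤ N) :
    (Ainf e N p).det ≠ 0 := by
  classical
  intro hdet0
  obtain ⟨v, hvne, hv0⟩ := (Matrix.exists_mulVec_eq_zero_iff).2 hdet0
  apply hvne
  -- the polynomial associated with the kernel vector
  set Pv : Polynomial ℝ := ∑ κ : (i : Fin r) × Fin (n i), C (v κ) * X ^ ((e κ : Fin M) : ℕ)
    with hPv
  have hMpos : 0 < M := by
    by_contra h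
    have hM0 : M = 0 := by omega
    apply hvne
    funext κ
    have hn0 : n κ.1 = 0 := by
      have h0 : ∑ i, n i = 0 := by omega
      exact Finset.sum_eq_zero_iff.1 h0 κ.1 (Finset.mem_univ _)
    exact absurd κ.2.isLt (by omega)
  have hPdeg : Pv.natDegree < M := by
    have : Pv.natDegree ≤ M - 1 := by
      refine Polynomial.natDegree_sum_le_of_forall_le _ _ fun κ _ => ?_
      refine le_trans (Polynomial.natDegree_C_mul_le _ _) ?_
      rw [Polynomial.natDegree_X_pow]
      have := (e κ).isLt
      omega
    omega
  have hPeval : ∀ x : ℕ, Pv.eval (x:ℝ)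
      = ∑ κ : (i : Fin r) × Fin (n i), v κ * ((x:ℝ)) ^ ((e κ : Fin M) : ℕ) := by
    intro x
    rw [hPv, Polynomial.eval_finset_sum]
    refine Finset.sum_congr rfl fun κ _ => ?_
    simp
  have hco : ∀ κ0, Pv.coeff ((e κ0 : Fin M) : ℕ) = v κ0 := by
    intro κ0
    rw [hPv, Polynomial.finset_sum_coeff, Finset.sum_eq_single κ0]
    · rw [Polynomial.coeff_C_mul, Polynomial.coeff_X_pow, if_pos rfl, mul_one]
    · intro κ _ hκ
      rw [Polynomial.coeff_C_mul, Polynomial.coeff_X_pow, if_neg, mul_zero]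
      intro h
      apply hκ
      apply e.injective
      exact Fin.ext h.symm
    · intro h
      exact absurd (Finset.mem_univ κ0) h
  have hcond : ∀ i : Fin r, ∀ k, k < n i →
      ∑ x ∈ range (N+1), Pv.eval (x:ℝ) * ffact x k *
        (((N.choose x : ℕ):ℝ) * (p i / (1 - p i)) ^ x) = 0 := by
    intro i k hk
    have hrow := congr_fun hv0 ⟨i, ⟨k, hk⟩⟩
    rw [Matrix.mulVec, dotProduct] at hrow
    have h1p : ((1:ℝ) - p i) ^ N ≠ 0 := pow_ne_zero _ (by have := (hp i).2; linarith)
    have hT1 : ∑ x ∈ range (N+1), Pv.eval (x:ℝ) * ffact x k * kWeight (p i) N x = 0 := by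
      have e1 : ∀ x ∈ range (N+1), Pv.eval (x:ℝ) * ffact x k * kWeight (p i) N x
          = ∑ κ : (i : Fin r) × Fin (n i),
              v κ * (((x:ℝ)) ^ ((e κ : Fin M) : ℕ) * (ffact x k * kWeight (p i) N x)) := by
        intro x _
        rw [hPeval x, Finset.sum_mul, Finset.sum_mul]
        exact Finset.sum_congr rfl fun κ _ => by ring
      rw [Finset.sum_congr rfl e1, Finset.sum_comm]
      have e2 : ∀ κ : (i : Fin r) × Fin (n i),
          ∑ x ∈ range (N+1), v κ * (((x:ℝ)) ^ ((e κ : Fin M) : ℕ) * (ffact x k * kWeight (p i) N x))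
            = Ainf e N p ⟨i, ⟨k, hk⟩⟩ κ * v κ := by
        intro κ
        rw [← Finset.mul_sum, mul_comm]
        rfl
      rw [Finset.sum_congr rfl (fun κ _ => e2 κ)]
      exact hrow
    have hT2 : ((1:ℝ) - p i)^N *
        (∑ x ∈ range (N+1), Pv.eval (x:ℝ) * ffact x k * (((N.choose x:ℕ):ℝ) * (p i/(1-p i))^x))
          = ∑ x ∈ range (N+1), Pv.eval (x:ℝ) * ffact x k * kWeight (p i) N x := by
      rw [Finset.mul_sum]
      refine Finset.sum_congr rfl fun x hx => ?_
      rw [kWeight_eq (p i) (hp i).1 (hp i).2 N x (Nat.lt_succ_iff.1 (mem_range.1 hx))]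
      ring
    rcases mul_eq_zero.1 (hT2.trans hT1) with h | h
    · exact absurd h h1p
    · exact h
  have hPv0 : Pv = 0 :=
    kernel N M r hMN n hM (fun i => p i / (1 - p i))
      (fun i => div_pos (hp i).1 (by have := (hp i).2; linarith))
      (t_inj p hp hdist) Pv hPdeg hcond
  funext κ
  rw [← hco κ, hPv0, Polynomial.coeff_zero]
  rfl

end S10

/-- the multiple `q`-Kravchuk polynomials converge on the lattice to the
multiple Kravchuk polynomials as `q → 1`. -/
theorem stmt10 (N r : ℕ) (hr : 1 ≤ r) (n : Fin r → ℕ) (hn : ∑ i, n i ≤ N)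
    (p : Fin r → ℝ) (hp : ∀ i, 0 < p i ∧ p i < 1)
    (hdist : ∀ i j, i ≠ j → p i ≠ p j)
    (β : Fin r → ℝ) (hβ : ∀ i, β i = 1 - p i)
    (Kq : ℝ → Polynomial ℝ)
    (hKq : ∀ q : ℝ, 0 < q → q ≠ 1 → (Kq q).Monic ∧ (Kq q).natDegree = ∑ i, n i ∧
      ∀ i : Fin r, ∀ k, k < n i → qOrth q (p i) (β i) N (Kq q) k = 0)
    (K : Polynomial ℝ) (hmonic : K.Monic) (hdeg : K.natDegree = ∑ i, n i)
    (horth : ∀ i : Fin r, ∀ j, j < n i →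
      ∑ x ∈ Finset.range (N + 1),
        K.eval (x : ℝ) * pochNeg (x : ℝ) j * kWeight (p i) N x = 0) :
    ∀ s : ℕ, s ≤ N →
      Filter.Tendsto (fun q : ℝ => (Kq q).eval (qlat q (s : ℤ)))
        (nhdsWithin 1 {q : ℝ | 0 < q ∧ q ≠ 1}) (nhds (K.eval (s : ℝ))) := by
  classical
  intro s _hs
  have e : ((i : Fin r) × Fin (n i)) ≃ Fin (∑ i, n i) :=
    Fintype.equivFinOfCardEq (by simp [Fintype.card_sigma])
  set M := ∑ i, n i with hMdef
  -- the coefficient vectors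
  set c : ℝ → ((i : Fin r) × Fin (n i)) → ℝ :=
    fun q κ => (Kq q).coeff ((e κ : Fin M) : ℕ) with hc
  set ci : ((i : Fin r) × Fin (n i)) → ℝ :=
    fun κ => K.coeff ((e κ : Fin M) : ℕ) with hci
  -- the q-linear system
  have hsys : ∀ q : ℝ, 0 < q → q ≠ 1 →
      (S10.Aq e N p q).mulVec (c q) = fun ρ => -(S10.bvq (n := n) M N p q ρ) := by
    intro q hq0 hq1
    obtain ⟨hmon, hdeg', horthq⟩ := hKq q hq0 hq1
    funext ρ
    have h0 := horthq ρ.1 ρ.2 ρ.2.isLt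
    rw [qOrth] at h0
    have hre : ∑ x ∈ range (N+1), (Kq q).eval (qlat q (x:ℤ)) * qStir q (x:ℤ) (ρ.2:ℕ)
          * qWeight q (p ρ.1) (β ρ.1) N (x:ℤ) * q ^ ((x:ℝ) - 1/2)
        = ∑ x ∈ range (N+1), (Kq q).eval (qlat q (x:ℤ)) * (qStir q (x:ℤ) (ρ.2:ℕ)
          * (qWeight q (p ρ.1) (1 - p ρ.1) N (x:ℤ) * q ^ ((x:ℝ) - 1/2))) := by
      refine Finset.sum_congr rfl fun x _ => ?_
      rw [hβ ρ.1]; ring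
    rw [hre] at h0
    rw [S10.orth_expand e (Kq q) hmon hdeg' (N+1) (fun x => qlat q (x:ℤ))
      (fun x => qStir q (x:ℤ) (ρ.2:ℕ)
        * (qWeight q (p ρ.1) (1 - p ρ.1) N (x:ℤ) * q ^ ((x:ℝ) - 1/2)))] at h0
    simp only [Matrix.mulVec, dotProduct, S10.Aq, S10.bvq, hc]
    linarith [h0]
  -- the classical linear system
  have horth' : ∀ i : Fin r, ∀ j, j < n i →
      ∑ x ∈ range (N+1), K.eval (x:ℝ) * (S10.ffact x j * kWeight (p i) N x) = 0 := by
    intro i j hj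
    have h0 := horth i j hj
    have hps : ∑ x ∈ range (N+1), K.eval (x:ℝ) * pochNeg (x:ℝ) j * kWeight (p i) N x
        = (-1)^j * ∑ x ∈ range (N+1), K.eval (x:ℝ) * (S10.ffact x j * kWeight (p i) N x) := by
      rw [Finset.mul_sum]
      refine Finset.sum_congr rfl fun x _ => ?_
      rw [S10.pochNeg_eq]; ring
    rw [hps] at h0
    rcases mul_eq_zero.1 h0 with h | h
    · exact absurd h (pow_ne_zero _ (by norm_num))
    · exact h
  have hsysinf : (S10.Ainf e N p).mulVec ci = fun ρ => -(S10.binf (n := n) M N p ρ) := by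
    funext ρ
    have h0 := horth' ρ.1 ρ.2 ρ.2.isLt
    rw [S10.orth_expand e K hmonic hdeg (N+1) (fun x => (x:ℝ))
      (fun x => S10.ffact x (ρ.2:ℕ) * kWeight (p ρ.1) N x)] at h0
    simp only [Matrix.mulVec, dotProduct, S10.Ainf, S10.binf, hci]
    linarith [h0]
  have hdet : (S10.Ainf e N p).det ≠ 0 :=
    S10.det_Ainf_ne_zero e p hp hdist hMdef.symm hn
  -- limits of the entries
  have hAlim : Filter.Tendsto (fun q => S10.Aq e N p q) S10.L (𝓝 (S10.Ainf e N p)) := by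
    refine tendsto_pi_nhds.2 ?_
    intro ρ
    refine tendsto_pi_nhds.2 ?_
    intro κ
    exact S10.tendsto_entry N (p ρ.1) (ρ.2:ℕ) ((e κ : Fin M):ℕ)
  have hblim : ∀ ρ, Filter.Tendsto (fun q => S10.bvq (n := n) M N p q ρ) S10.L
      (𝓝 (S10.binf (n := n) M N p ρ)) := by
    intro ρ
    exact S10.tendsto_entry N (p ρ.1) (ρ.2:ℕ) M
  have hdetlim : Filter.Tendsto (fun q => (S10.Aq e N p q).det) S10.L
      (𝓝 ((S10.Ainf e N p).det)) :=
    ((Continuous.matrix_det continuous_id).tendsto (S10.Ainf e N p)).comp hAlim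
  have hadjlim : ∀ κ ρ, Filter.Tendsto (fun q => (S10.Aq e N p q).adjugate κ ρ) S10.L
      (𝓝 ((S10.Ainf e N p).adjugate κ ρ)) := by
    intro κ ρ
    have hcont : Continuous fun m : Matrix ((i : Fin r) × Fin (n i)) ((i : Fin r) × Fin (n i)) ℝ =>
        m.adjugate κ ρ := (Continuous.matrix_adjugate continuous_id).matrix_elem κ ρ
    exact (hcont.tendsto _).comp hAlim
  have hev : ∀ᶠ q in S10.L, (0 < q ∧ q ≠ 1) ∧ (S10.Aq e N p q).det ≠ 0 :=
    Filter.Eventually.and eventually_mem_nhdsWithin (hdetlim.eventually_ne hdet)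
  -- Cramer
  have hcramer : ∀ q : ℝ, 0 < q → q ≠ 1 → (S10.Aq e N p q).det • (c q)
      = (S10.Aq e N p q).adjugate.mulVec (fun ρ => -(S10.bvq (n := n) M N p q ρ)) := by
    intro q h0 h1
    rw [← hsys q h0 h1, Matrix.mulVec_mulVec, Matrix.adjugate_mul, Matrix.smul_mulVec,
      Matrix.one_mulVec]
  have hcramerinf : (S10.Ainf e N p).det • ci
      = (S10.Ainf e N p).adjugate.mulVec (fun ρ => -(S10.binf (n := n) M N p ρ)) := by
    rw [← hsysinf, Matrix.mulVec_mulVec, Matrix.adjugate_mul, Matrix.smul_mulVec,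
      Matrix.one_mulVec]
  have hctend : ∀ κ, Filter.Tendsto (fun q => c q κ) S10.L (𝓝 (ci κ)) := by
    intro κ
    have hnum : Filter.Tendsto
        (fun q => ((S10.Aq e N p q).adjugate.mulVec (fun ρ => -(S10.bvq (n := n) M N p q ρ))) κ)
        S10.L
        (𝓝 (((S10.Ainf e N p).adjugate.mulVec (fun ρ => -(S10.binf (n := n) M N p ρ))) κ)) := by
      simp only [Matrix.mulVec, dotProduct]
      refine tendsto_finset_sum _ fun ρ _ => ?_
      exact (hadjlim κ ρ).mul ((hblim ρ).neg)
    have hdiv := hnum.div hdetlim hdet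
    have hval : ((S10.Ainf e N p).adjugate.mulVec (fun ρ => -(S10.binf (n := n) M N p ρ))) κ
        / (S10.Ainf e N p).det = ci κ := by
      have h1 := congr_fun hcramerinf κ
      rw [Pi.smul_apply, smul_eq_mul] at h1
      rw [div_eq_iff hdet, mul_comm]
      exact h1.symm
    rw [hval] at hdiv
    refine hdiv.congr' ?_
    filter_upwards [hev] with q hq
    have h1 := congr_fun (hcramer q hq.1.1 hq.1.2) κ
    rw [Pi.smul_apply, smul_eq_mul] at h1
    simp only [Pi.div_apply]
    rw [div_eq_iff hq.2, mul_comm]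
    exact h1.symm
  -- final assembly
  have hfin : Filter.Tendsto
      (fun q : ℝ => ∑ κ : (i : Fin r) × Fin (n i), c q κ * (qlat q (s:ℤ)) ^ ((e κ : Fin M):ℕ)
        + (qlat q (s:ℤ)) ^ M) S10.L
      (𝓝 (∑ κ : (i : Fin r) × Fin (n i), ci κ * ((s:ℝ)) ^ ((e κ : Fin M):ℕ) + ((s:ℝ)) ^ M)) := by
    refine Filter.Tendsto.add ?_ ((S10.tendsto_qlat s).pow M)
    exact tendsto_finset_sum _ fun κ _ => (hctend κ).mul ((S10.tendsto_qlat s).pow _)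
  have hKval : K.eval ((s:ℝ))
      = ∑ κ : (i : Fin r) × Fin (n i), ci κ * ((s:ℝ)) ^ ((e κ : Fin M):ℕ) + ((s:ℝ)) ^ M :=
    S10.eval_expand e K hmonic hdeg ((s:ℝ))
  rw [hKval]
  refine Filter.Tendsto.congr' ?_ hfin
  filter_upwards [eventually_mem_nhdsWithin] with q hq
  obtain ⟨hmon, hdeg', _⟩ := hKq q hq.1 hq.2
  exact (S10.eval_expand e (Kq q) hmon hdeg' (qlat q (s:ℤ))).symm
end

section
/- (Summation-by-parts orthogonality.) Let q > 0 with q ≠ 1, N ∈ ℕ, r ≥ 1, n ∈ ℕ^r with |n| ≤ N, p_1,…,p_r ∈ (0,1) and β_1,…,β_r > 0, and let K be a monic polynomial of degree |n| satisfying Σ_{s=0}^{N} K(x(s)) [s]_q^{(k)} υ_q^{p_i,β_i,N}(s) q^{s−1/2} = 0 for 0 ≤ k ≤ n_i − 1, i = 1,…,r. Then for each i and each 0 ≤ k ≤ n_i − 1: Σ_{s=0}^{N+1} ∇_q( υ_q^{p_i,β_i,N}(·) K(x(·)) )(s) · [s]_q^{(k+1)} · q^{s−1/2} = 0. -/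
open Finset

/-- The backward lattice difference operator `∇_q f(s) = q^{1/2-s}(f(s) - f(s-1))`. -/
noncomputable def nablaQ (q : ℝ) (f : ℤ → ℝ) (s : ℤ) : ℝ :=
  q ^ (1 / 2 - (s : ℝ)) * (f s - f (s - 1))

lemma qStir_succ_right (q : ℝ) (s : ℤ) (k : ℕ) :
    qStir q s (k + 1) = qStir q s k * ((q ^ (s - (k : ℤ)) - 1) / (q - 1)) := by
  unfold qStir; rw [Finset.prod_range_succ]

lemma qStir_succ_left (q : ℝ) (s : ℤ) (k : ℕ) :
    qStir q (s + 1) (k + 1) = qStir q s k * ((q ^ (s + 1) - 1) / (q - 1)) := by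
  unfold qStir
  rw [Finset.prod_range_succ']
  congr 1
  · refine Finset.prod_congr rfl fun j _ => ?_
    congr 2
    push_cast; ring
  · norm_num

lemma qWeight_neg (q p β : ℝ) (N : ℕ) : qWeight q p β N (-1) = 0 := by
  simp [qWeight]

lemma qWeight_top (q p β : ℝ) (N : ℕ) : qWeight q p β N ((N : ℤ) + 1) = 0 := by
  simp [qWeight]

/-- summation by parts turns the orthogonality conditions for `K` into
`Σ_{s=0}^{N+1} ∇_q(υ_q^{p_i,β_i,N}(·) K(x(·)))(s) [s]_q^{(k+1)} q^{s-1/2} = 0`. -/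
theorem stmt15 (q : ℝ) (hq : 0 < q) (hq1 : q ≠ 1) (N r : ℕ) (hr : 1 ≤ r)
    (n : Fin r → ℕ) (hn : ∑ i, n i ≤ N)
    (p β : Fin r → ℝ) (hp : ∀ i, 0 < p i ∧ p i < 1) (hβ : ∀ i, 0 < β i)
    (K : Polynomial ℝ) (hmonic : K.Monic) (hdeg : K.natDegree = ∑ i, n i)
    (horth : ∀ i : Fin r, ∀ k, k < n i → qOrth q (p i) (β i) N K k = 0) :
    ∀ i : Fin r, ∀ k, k < n i →
      ∑ s ∈ Finset.range (N + 2),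
        nablaQ q (fun t => qWeight q (p i) (β i) N t * K.eval (qlat q t)) (s : ℤ) *
          qStir q (s : ℤ) (k + 1) * q ^ ((s : ℝ) - 1 / 2) = 0 := by
  intro i k hk
  set f : ℤ → ℝ := fun t => qWeight q (p i) (β i) N t * K.eval (qlat q t) with hf
  -- Step 1: the rpow factors cancel.
  have key : ∀ s : ℕ, nablaQ q f (s : ℤ) * qStir q (s : ℤ) (k + 1) * q ^ ((s : ℝ) - 1 / 2)
      = f s * qStir q (s : ℤ) (k + 1) - f ((s : ℤ) - 1) * qStir q (s : ℤ) (k + 1) := by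
    intro s
    have h1 : q ^ (1 / 2 - (((s : ℤ) : ℤ) : ℝ)) * q ^ ((s : ℝ) - 1 / 2) = 1 := by
      rw [← Real.rpow_add hq]
      push_cast
      ring_nf
      exact Real.rpow_zero q
    unfold nablaQ
    calc q ^ (1 / 2 - (((s : ℤ) : ℤ) : ℝ)) * (f s - f ((s : ℤ) - 1)) * qStir q (s : ℤ) (k + 1)
          * q ^ ((s : ℝ) - 1 / 2)
        = (f s * qStir q (s : ℤ) (k + 1) - f ((s : ℤ) - 1) * qStir q (s : ℤ) (k + 1))
          * (q ^ (1 / 2 - (((s : ℤ) : ℤ) : ℝ)) * q ^ ((s : ℝ) - 1 / 2)) := by ring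
      _ = _ := by rw [h1, mul_one]
  rw [Finset.sum_congr rfl fun s _ => key s, Finset.sum_sub_distrib]
  -- Step 2: summation by parts.
  have hA : ∑ s ∈ Finset.range (N + 2), f s * qStir q (s : ℤ) (k + 1)
      = ∑ s ∈ Finset.range (N + 1), f s * qStir q (s : ℤ) (k + 1) := by
    rw [Finset.sum_range_succ]
    have : f ((N + 1 : ℕ) : ℤ) = 0 := by
      simp only [hf]
      rw [show (((N + 1 : ℕ)) : ℤ) = (N : ℤ) + 1 by push_cast; ring, qWeight_top, zero_mul]
    rw [this, zero_mul, add_zero]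
  have hB : ∑ s ∈ Finset.range (N + 2), f ((s : ℤ) - 1) * qStir q (s : ℤ) (k + 1)
      = ∑ s ∈ Finset.range (N + 1), f s * qStir q ((s : ℤ) + 1) (k + 1) := by
    rw [Finset.sum_range_succ']
    have hfneg : f (-1) = 0 := by simp [hf, qWeight_neg]
    simp only [Nat.cast_add, Nat.cast_one, add_sub_cancel_right, Nat.cast_zero, zero_sub,
      hfneg, zero_mul, add_zero]
  rw [hA, hB, ← Finset.sum_sub_distrib]
  -- Step 3: rewrite each term as a multiple of the orthogonality summand.
  set c : ℝ := (q ^ ((1 : ℝ) / 2 - (k : ℝ)) - q ^ ((3 : ℝ) / 2)) / (q - 1) with hc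
  have hterm : ∀ s : ℕ,
      f s * qStir q (s : ℤ) (k + 1) - f s * qStir q ((s : ℤ) + 1) (k + 1)
      = c * (K.eval (qlat q (s : ℤ)) * qStir q (s : ℤ) k * qWeight q (p i) (β i) N (s : ℤ)
          * q ^ ((s : ℝ) - 1 / 2)) := by
    intro s
    rw [qStir_succ_right, qStir_succ_left]
    have hz : q ^ ((s : ℤ) - (k : ℤ)) - q ^ ((s : ℤ) + 1)
        = (q ^ ((1 : ℝ) / 2 - (k : ℝ)) - q ^ ((3 : ℝ) / 2)) * q ^ ((s : ℝ) - 1 / 2) := by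
      rw [← Real.rpow_intCast q ((s : ℤ) - (k : ℤ)), ← Real.rpow_intCast q ((s : ℤ) + 1)]
      rw [show ((((s : ℤ) - (k : ℤ)) : ℤ) : ℝ) = ((1 : ℝ) / 2 - (k : ℝ)) + ((s : ℝ) - 1 / 2) by
        push_cast; ring]
      rw [show ((((s : ℤ) + 1) : ℤ) : ℝ) = ((3 : ℝ) / 2) + ((s : ℝ) - 1 / 2) by
        push_cast; ring]
      rw [Real.rpow_add hq, Real.rpow_add hq]
      ring
    simp only [hf, hc]
    linear_combination (qWeight q (p i) (β i) N (s : ℤ) * Polynomial.eval (qlat q (s : ℤ)) K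
      * qStir q (s : ℤ) k / (q - 1)) * hz
  rw [Finset.sum_congr rfl fun s _ => hterm s, ← Finset.mul_sum]
  have := horth i k hk
  unfold qOrth at this
  rw [this, mul_zero]
end
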